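/- For all 1 < α ≤ 2 and 0 < β < α−1, the integral ∫_ℝ ∫_ℝ ∫_0^∞ ( ∫_0^1 ∫_0^1 h₃(t−u, s−v, z) dt ds )^α z^β dz dv du is finite. -/

import Mathlib

open MeasureTheory Filter Set
open scoped ENNReal

noncomputable def h3 (t s z : ℝ) : ℝ :=
  if 0 < t then 3 / (2 * Real.sqrt (Real.pi * t)) * Real.exp (-3 * z * t - s ^ 2 / (4 * t))
  else 0

section helpers

open Real

lemma h3_nonneg (t s z : ℝ) : 0 ≤ h3 t s z := by
  unfold h3; split
  · positivity
  · exact le_rfl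

lemma h3_measurable : Measurable fun p : ℝ × ℝ × ℝ => h3 p.1 p.2.1 p.2.2 := by
  unfold h3
  apply Measurable.ite (measurableSet_lt measurable_const measurable_fst)
  · fun_prop
  · fun_prop

lemma h3_comp_meas {X : Type*} [MeasurableSpace X] {A B C : X → ℝ} (hA : Measurable A)
    (hB : Measurable B) (hC : Measurable C) :
    Measurable fun x => ENNReal.ofReal (h3 (A x) (B x) (C x)) :=
  ENNReal.measurable_ofReal.comp (h3_measurable.comp (hA.prodMk (hB.prodMk hC)))

lemma ofReal_int_le {X : Type*} [MeasurableSpace X] (μ : Measure X) (f : X → ℝ)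
    (hf : 0 ≤ᵐ[μ] f) :
    ENNReal.ofReal (∫ x, f x ∂μ) ≤ ∫⁻ x, ENNReal.ofReal (f x) ∂μ := by
  by_cases hfi : Integrable f μ
  · exact (ofReal_integral_eq_lintegral_ofReal hfi hf).le
  · rw [integral_undef hfi]; simp

lemma lintegral_translate (f : ℝ → ℝ≥0∞) (c : ℝ) :
    ∫⁻ x : ℝ, f (x - c) = ∫⁻ x, f x := by
  have := (measurePreserving_add_right (volume : Measure ℝ) (-c)).lintegral_comp_emb
    (MeasurableEquiv.addRight (-c)).measurableEmbedding f
  simpa [sub_eq_add_neg] using this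

lemma setLIntegral_translate (f : ℝ → ℝ≥0∞) (c : ℝ) (s : Set ℝ) :
    ∫⁻ x in s, f (x - c) = ∫⁻ x in (fun y => y + (-c)) '' s, f x := by
  have := (measurePreserving_add_right (volume : Measure ℝ) (-c)).setLIntegral_comp_emb
    (MeasurableEquiv.addRight (-c)).measurableEmbedding f s
  simpa [sub_eq_add_neg] using this

lemma lintegral_Iio_neg (f : ℝ → ℝ≥0∞) :
    ∫⁻ x in Iio (0:ℝ), f x = ∫⁻ x in Ioi (0:ℝ), f (-x) := by
  have := (Measure.measurePreserving_neg (volume : Measure ℝ)).setLIntegral_comp_preimage_emb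
    (MeasurableEquiv.neg ℝ).measurableEmbedding f (Iio 0)
  rw [← this]
  congr 1
  ext x
  simp

-- E1: exponential tail
lemma lint_exp_tail {a : ℝ} (ha : 0 < a) (c : ℝ) :
    ∫⁻ x in Ioi c, ENNReal.ofReal (Real.exp (-(a * x))) = ENNReal.ofReal (Real.exp (-(a*c)) / a) := by
  have hint : IntegrableOn (fun x => Real.exp (-(a * x))) (Ioi c) := by
    simpa [neg_mul] using exp_neg_integrableOn_Ioi c ha
  rw [← ofReal_integral_eq_lintegral_ofReal hint
      (Filter.Eventually.of_forall fun x => (Real.exp_pos _).le)]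
  congr 1
  have := integral_comp_mul_left_Ioi (fun x => Real.exp (-x)) c ha
  simp only [smul_eq_mul] at this
  calc ∫ x in Ioi c, Real.exp (-(a * x)) = a⁻¹ * ∫ x in Ioi (a*c), Real.exp (-x) := this
    _ = Real.exp (-(a*c)) / a := by rw [integral_exp_neg_Ioi]; ring

-- E2: rpow window
lemma lint_rpow_window {a b : ℝ} (h0 : 0 ≤ a) (hab : a ≤ b) :
    ∫⁻ x in Ioc a b, ENNReal.ofReal (x ^ (-(1/2) : ℝ)) =
      ENNReal.ofReal (2 * (b ^ ((1:ℝ)/2) - a ^ ((1:ℝ)/2))) := by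
  have hii : IntervalIntegrable (fun x : ℝ => x ^ (-(1/2) : ℝ)) volume a b :=
    intervalIntegral.intervalIntegrable_rpow' (by norm_num)
  have hint : IntegrableOn (fun x : ℝ => x ^ (-(1/2) : ℝ)) (Ioc a b) :=
    (intervalIntegrable_iff_integrableOn_Ioc_of_le hab).1 hii
  have hnn : 0 ≤ᵐ[volume.restrict (Ioc a b)] fun x : ℝ => x ^ (-(1/2) : ℝ) := by
    filter_upwards [ae_restrict_mem measurableSet_Ioc] with x hx
    exact Real.rpow_nonneg (le_of_lt (lt_of_le_of_lt h0 hx.1)) _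
  rw [← ofReal_integral_eq_lintegral_ofReal hint hnn]
  congr 1
  have := integral_rpow (a := a) (b := b) (r := -(1/2)) (Or.inl (by norm_num))
  rw [intervalIntegral.integral_of_le hab] at this
  rw [this]
  norm_num
  ring

-- E3: Gamma half integral
lemma lint_gamma_half {a : ℝ} (ha : 0 < a) :
    ∫⁻ x in Ioi (0:ℝ), ENNReal.ofReal (x ^ (-(1/2) : ℝ) * Real.exp (-(a * x))) =
      ENNReal.ofReal (Real.sqrt π / Real.sqrt a) := by
  have hcongr : ∀ x ∈ Ioi (0:ℝ),
      x ^ (-(1/2) : ℝ) * Real.exp (-(a * x)) = x ^ (-(1/2) : ℝ) * Real.exp (-a * x ^ (1:ℝ)) := by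
    intro x hx
    rw [Real.rpow_one]; ring_nf
  have hint : IntegrableOn (fun x : ℝ => x ^ (-(1/2) : ℝ) * Real.exp (-(a * x))) (Ioi 0) := by
    have := integrableOn_rpow_mul_exp_neg_mul_rpow (p := 1) (s := -(1/2)) (b := a)
      (by norm_num) (by norm_num) ha
    exact (integrableOn_congr_fun hcongr measurableSet_Ioi).2 this
  have hnn : 0 ≤ᵐ[volume.restrict (Ioi (0:ℝ))]
      fun x : ℝ => x ^ (-(1/2) : ℝ) * Real.exp (-(a * x)) := by
    filter_upwards [ae_restrict_mem measurableSet_Ioi] with x hx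
    have : (0:ℝ) ≤ x := le_of_lt hx
    positivity
  rw [← ofReal_integral_eq_lintegral_ofReal hint hnn]
  congr 1
  rw [setIntegral_congr_fun measurableSet_Ioi hcongr]
  rw [integral_rpow_mul_exp_neg_mul_rpow (by norm_num) (by norm_num) ha]
  have h1 : (-(-(1/2) + 1) / 1 : ℝ) = -(1/2) := by norm_num
  have h2 : ((-(1/2) + 1) / 1 : ℝ) = 1/2 := by norm_num
  rw [h1, h2, Real.Gamma_one_half_eq]
  rw [Real.rpow_neg ha.le, Real.sqrt_eq_rpow, Real.sqrt_eq_rpow]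
  ring

-- E4: Gaussian
lemma lint_gaussian {τ : ℝ} (hτ : 0 < τ) (v : ℝ) :
    ∫⁻ s : ℝ, ENNReal.ofReal (Real.exp (-((s - v)^2 / (4*τ)))) =
      ENNReal.ofReal (2 * Real.sqrt (π * τ)) := by
  have h := lintegral_translate (f := fun x => ENNReal.ofReal (Real.exp (-(x^2 / (4*τ))))) v
  calc ∫⁻ s : ℝ, ENNReal.ofReal (Real.exp (-((s - v)^2 / (4*τ))))
      = ∫⁻ x : ℝ, ENNReal.ofReal (Real.exp (-(x^2 / (4*τ)))) := h
    _ = ENNReal.ofReal (2 * Real.sqrt (π * τ)) := by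
        have hb : (0:ℝ) < (4*τ)⁻¹ := by positivity
        have hint : Integrable (fun x : ℝ => Real.exp (-(4*τ)⁻¹ * x^2)) :=
          integrable_exp_neg_mul_sq hb
        have hcongr : (fun x : ℝ => Real.exp (-(x^2 / (4*τ)))) =
            fun x : ℝ => Real.exp (-(4*τ)⁻¹ * x^2) := by
          funext x; congr 1; field_simp
        simp only [show ∀ x : ℝ, -(x^2 / (4*τ)) = -(4*τ)⁻¹ * x^2 from fun x => by field_simp]
        rw [← ofReal_integral_eq_lintegral_ofReal hint
          (Filter.Eventually.of_forall fun x => (Real.exp_pos _).le)]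
        rw [integral_gaussian]
        congr 1
        rw [show (π / (4*τ)⁻¹) = 2^2 * (π * τ) by field_simp; ring]
        rw [Real.sqrt_mul (by norm_num) (π * τ), Real.sqrt_sq (by norm_num)]

-- E5: two-sided exponential
lemma lint_exp_abs {c : ℝ} (hc : 0 < c) :
    ∫⁻ x : ℝ, ENNReal.ofReal (Real.exp (-(c * |x|))) ≤ ENNReal.ofReal (2 / c) := by
  rw [← lintegral_add_compl (fun x => ENNReal.ofReal (Real.exp (-(c * |x|)))) measurableSet_Iio
    (A := Iio (0:ℝ))]
  have hIio : ∫⁻ x in Iio (0:ℝ), ENNReal.ofReal (Real.exp (-(c * |x|)))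
      ≤ ENNReal.ofReal (1 / c) := by
    rw [lintegral_Iio_neg]
    have : ∀ x ∈ Ioi (0:ℝ), ENNReal.ofReal (Real.exp (-(c * |(-x)|)))
        = ENNReal.ofReal (Real.exp (-(c * x))) := by
      intro x hx
      rw [abs_neg, abs_of_pos hx]
    rw [setLIntegral_congr_fun measurableSet_Ioi this]
    rw [lint_exp_tail hc 0]
    simp
  have hIci : ∫⁻ x in (Iio (0:ℝ))ᶜ, ENNReal.ofReal (Real.exp (-(c * |x|)))
      ≤ ENNReal.ofReal (1 / c) := by
    rw [compl_Iio]
    have : ∀ x ∈ Ici (0:ℝ), ENNReal.ofReal (Real.exp (-(c * |x|)))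
        = ENNReal.ofReal (Real.exp (-(c * x))) := by
      intro x hx; rw [abs_of_nonneg hx]
    rw [setLIntegral_congr_fun measurableSet_Ici this]
    rw [← setLIntegral_congr (Ioi_ae_eq_Ici (a := (0:ℝ)))]
    rw [lint_exp_tail hc 0]
    simp
  calc _ ≤ ENNReal.ofReal (1/c) + ENNReal.ofReal (1/c) := add_le_add hIio hIci
    _ = ENNReal.ofReal (2/c) := by rw [← ENNReal.ofReal_add (by positivity) (by positivity)]; ring_nf


lemma coeff_eq {τ : ℝ} (hτ : 0 < τ) :
    3 / (2 * Real.sqrt (π*τ)) = 3/(2*Real.sqrt π) * τ ^ (-(1/2) : ℝ) := by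
  rw [Real.sqrt_mul pi_pos.le, Real.rpow_neg hτ.le, ← Real.sqrt_eq_rpow]
  have h1 : Real.sqrt τ > 0 := Real.sqrt_pos.mpr hτ
  have h2 : Real.sqrt π > 0 := Real.sqrt_pos.mpr pi_pos
  field_simp

-- K2
lemma h3_le_small {z : ℝ} (hz : 0 ≤ z) (τ σ : ℝ) :
    h3 τ σ z ≤ 3/(2*Real.sqrt π) * (if 0 < τ then τ ^ (-(1/2):ℝ) else 0) := by
  unfold h3; split_ifs with h
  · have hexp : Real.exp (-3 * z * τ - σ^2/(4*τ)) ≤ 1 := by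
      rw [Real.exp_le_one_iff]
      have h1 : 0 ≤ 3 * z * τ := by positivity
      have h2 : 0 ≤ σ^2/(4*τ) := by positivity
      linarith
    calc 3 / (2 * Real.sqrt (π*τ)) * Real.exp (-3 * z * τ - σ^2/(4*τ))
        ≤ 3 / (2 * Real.sqrt (π*τ)) * 1 := by
          apply mul_le_mul_of_nonneg_left hexp; positivity
      _ = 3/(2*Real.sqrt π) * τ ^ (-(1/2):ℝ) := by rw [mul_one, coeff_eq h]
  · simp

-- K1
lemma h3_le_prod {z : ℝ} (hz : 0 < z) (τ σ : ℝ) :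
    h3 τ σ z ≤ (3/(2*Real.sqrt π))
      * (if 0 < τ then τ ^ (-(1/2):ℝ) * Real.exp (-(3*z/2*τ)) else 0)
      * Real.exp (-(Real.sqrt (3*z/2) * |σ|)) := by
  unfold h3; split_ifs with h
  · have hA : (0:ℝ) ≤ 3*z/2 := by positivity
    have hsq : Real.sqrt (3*z/2) ^ 2 = 3*z/2 := Real.sq_sqrt hA
    have hsqτ : Real.sqrt τ ^ 2 = τ := Real.sq_sqrt h.le
    have hsτpos : 0 < Real.sqrt τ := Real.sqrt_pos.mpr h
    have key : Real.sqrt (3*z/2) * |σ| ≤ 3*z/2*τ + σ^2/(4*τ) := by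
      have hP : σ^2/(4*τ) = (|σ|/(2*Real.sqrt τ))^2 := by
        rw [div_pow, mul_pow, sq_abs, hsqτ]; norm_num
      have h2 : Real.sqrt (3*z/2) * |σ|
          = 2 * (Real.sqrt (3*z/2) * Real.sqrt τ) * (|σ|/(2*Real.sqrt τ)) := by
        field_simp
      rw [h2, hP]
      calc 2 * (Real.sqrt (3*z/2) * Real.sqrt τ) * (|σ|/(2*Real.sqrt τ))
          ≤ (Real.sqrt (3*z/2) * Real.sqrt τ)^2 + (|σ|/(2*Real.sqrt τ))^2 :=
            two_mul_le_add_sq _ _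
        _ = 3*z/2*τ + (|σ|/(2*Real.sqrt τ))^2 := by rw [mul_pow, hsq, hsqτ]
    have hexp : Real.exp (-3*z*τ - σ^2/(4*τ))
        ≤ Real.exp (-(3*z/2*τ)) * Real.exp (-(Real.sqrt (3*z/2) * |σ|)) := by
      rw [← Real.exp_add]
      apply Real.exp_le_exp.mpr
      linarith
    calc 3 / (2 * Real.sqrt (π*τ)) * Real.exp (-3 * z * τ - σ^2/(4*τ))
        ≤ 3 / (2 * Real.sqrt (π*τ))
            * (Real.exp (-(3*z/2*τ)) * Real.exp (-(Real.sqrt (3*z/2) * |σ|))) := by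
          apply mul_le_mul_of_nonneg_left hexp; positivity
      _ = (3/(2*Real.sqrt π)) * (τ ^ (-(1/2):ℝ) * Real.exp (-(3*z/2*τ)))
            * Real.exp (-(Real.sqrt (3*z/2) * |σ|)) := by rw [coeff_eq h]; ring
  · simp [Real.exp_nonneg]

lemma sqrt_pi_half : (3:ℝ)/(2*Real.sqrt π) ≤ 1 := by
  have h15 : (1.5:ℝ) ≤ Real.sqrt π := by
    rw [show (1.5:ℝ) = Real.sqrt (1.5^2) from (Real.sqrt_sq (by norm_num)).symm]
    exact Real.sqrt_le_sqrt (by nlinarith [Real.pi_gt_three])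
  rw [div_le_one (by nlinarith)]
  linarith

-- window bound
lemma window_bound (u : ℝ) :
    ∫⁻ t in Ioc (0:ℝ) 1, ENNReal.ofReal (if 0 < t - u then (t-u) ^ (-(1/2):ℝ) else 0)
      ≤ ENNReal.ofReal 2 := by
  have htr := setLIntegral_translate
    (f := fun τ => ENNReal.ofReal (if 0 < τ then τ ^ (-(1/2):ℝ) else 0)) u (Ioc 0 1)
  rw [htr, image_add_const_Ioc]
  set a := max (-u) 0 with ha
  have ha0 : 0 ≤ a := le_max_right _ _
  have hind : (fun x : ℝ => ENNReal.ofReal (if 0 < x then x ^ (-(1/2):ℝ) else 0))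
      = (Ioi (0:ℝ)).indicator (fun x => ENNReal.ofReal (x ^ (-(1/2):ℝ))) := by
    funext x; by_cases hx : 0 < x <;> simp [Set.indicator, hx]
  rw [hind, lintegral_indicator measurableSet_Ioi, Measure.restrict_restrict measurableSet_Ioi]
  have hsub : Ioi (0:ℝ) ∩ Ioc (0 + -u) (1 + -u) ⊆ Ioc a (a+1) := by
    rintro x ⟨hx0, hx1, hx2⟩
    constructor
    · exact max_lt (by linarith) hx0
    · have := le_max_left (-u) 0
      linarith
  calc ∫⁻ x in Ioi (0:ℝ) ∩ Ioc (0 + -u) (1 + -u), ENNReal.ofReal (x ^ (-(1/2):ℝ))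
      ≤ ∫⁻ x in Ioc a (a+1), ENNReal.ofReal (x ^ (-(1/2):ℝ)) := lintegral_mono_set hsub
    _ = ENNReal.ofReal (2 * ((a+1) ^ ((1:ℝ)/2) - a ^ ((1:ℝ)/2))) :=
        lint_rpow_window ha0 (by linarith)
    _ ≤ ENNReal.ofReal 2 := by
        apply ENNReal.ofReal_le_ofReal
        rw [← Real.sqrt_eq_rpow, ← Real.sqrt_eq_rpow]
        have h := Real.sqrt_le_sqrt (show a+1 ≤ (Real.sqrt a + 1)^2 by
          nlinarith [Real.sq_sqrt ha0, Real.sqrt_nonneg a])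
        rw [Real.sqrt_sq (by positivity)] at h
        nlinarith [Real.sqrt_nonneg a]

end helpers

noncomputable def Lk (u v z : ℝ) : ℝ≥0∞ :=
  ∫⁻ s in Ioc (0:ℝ) 1, ∫⁻ t in Ioc (0:ℝ) 1, ENNReal.ofReal (h3 (t-u) (s-v) z)

section kernel

open Real

lemma Lk_meas (u : ℝ) : Measurable fun p : ℝ × ℝ => Lk u p.1 p.2 := by
  have g_meas : Measurable fun r : ((ℝ × ℝ) × ℝ) × ℝ =>
      ENNReal.ofReal (h3 (r.2 - u) (r.1.2 - r.1.1.1) r.1.1.2) :=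
    h3_comp_meas (measurable_snd.sub measurable_const)
      (measurable_fst.snd.sub measurable_fst.fst.fst) measurable_fst.fst.snd
  have f_meas : Measurable fun q : (ℝ × ℝ) × ℝ =>
      ∫⁻ t in Ioc (0:ℝ) 1, ENNReal.ofReal (h3 (t - u) (q.2 - q.1.1) q.1.2) :=
    g_meas.lintegral_prod_right'
  exact f_meas.lintegral_prod_right'

lemma Lk_le_small (u v z : ℝ) (hz : 0 ≤ z) : Lk u v z ≤ ENNReal.ofReal 2 := by
  unfold Lk
  have inner : ∀ s : ℝ, ∫⁻ t in Ioc (0:ℝ) 1, ENNReal.ofReal (h3 (t-u) (s-v) z)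
      ≤ ENNReal.ofReal 2 := by
    intro s
    calc ∫⁻ t in Ioc (0:ℝ) 1, ENNReal.ofReal (h3 (t-u) (s-v) z)
        ≤ ∫⁻ t in Ioc (0:ℝ) 1, ENNReal.ofReal (3/(2*Real.sqrt π))
            * ENNReal.ofReal (if 0 < t - u then (t-u) ^ (-(1/2):ℝ) else 0) := by
          apply lintegral_mono; intro t
          dsimp only
          rw [← ENNReal.ofReal_mul (by positivity)]
          exact ENNReal.ofReal_le_ofReal (h3_le_small hz (t-u) (s-v))
      _ = ENNReal.ofReal (3/(2*Real.sqrt π))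
            * ∫⁻ t in Ioc (0:ℝ) 1, ENNReal.ofReal (if 0 < t - u then (t-u) ^ (-(1/2):ℝ) else 0) :=
          lintegral_const_mul' _ _ ENNReal.ofReal_ne_top
      _ ≤ 1 * ENNReal.ofReal 2 := by
          apply mul_le_mul'
          · exact ENNReal.ofReal_le_one.mpr sqrt_pi_half
          · exact window_bound u
      _ = ENNReal.ofReal 2 := one_mul _
  calc ∫⁻ s in Ioc (0:ℝ) 1, ∫⁻ t in Ioc (0:ℝ) 1, ENNReal.ofReal (h3 (t-u) (s-v) z)
      ≤ ∫⁻ _ in Ioc (0:ℝ) 1, ENNReal.ofReal 2 :=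
        setLIntegral_mono' measurableSet_Ioc (fun s _ => inner s)
    _ = ENNReal.ofReal 2 := by
        rw [setLIntegral_const, Real.volume_Ioc]
        norm_num

lemma Lk_le_inv (u v : ℝ) {z : ℝ} (hz : 0 < z) : Lk u v z ≤ ENNReal.ofReal (2 / z) := by
  set A := Real.sqrt (3*z/2) with hA
  have hApos : 0 < A := Real.sqrt_pos.mpr (by linarith)
  have hA2 : A^2 = 3*z/2 := Real.sq_sqrt (by linarith)
  -- Q integral bound
  have Qint : ∫⁻ t : ℝ, ENNReal.ofReal
      (if 0 < t - u then (t-u) ^ (-(1/2):ℝ) * Real.exp (-(3*z/2*(t-u))) else 0)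
      = ENNReal.ofReal (Real.sqrt π / A) := by
    rw [lintegral_translate
      (f := fun τ => ENNReal.ofReal (if 0 < τ then τ ^ (-(1/2):ℝ) * Real.exp (-(3*z/2*τ)) else 0)) u]
    have hind : (fun x : ℝ => ENNReal.ofReal (if 0 < x then x ^ (-(1/2):ℝ) * Real.exp (-(3*z/2*x)) else 0))
        = (Ioi (0:ℝ)).indicator (fun x => ENNReal.ofReal (x ^ (-(1/2):ℝ) * Real.exp (-(3*z/2*x)))) := by
      funext x; by_cases hx : 0 < x <;> simp [Set.indicator, hx]
    rw [hind, lintegral_indicator measurableSet_Ioi]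
    exact lint_gamma_half (by linarith)
  -- main chain
  unfold Lk
  have step1 : ∀ s : ℝ, ∫⁻ t in Ioc (0:ℝ) 1, ENNReal.ofReal (h3 (t-u) (s-v) z)
      ≤ ENNReal.ofReal ((3/2) / A) * ENNReal.ofReal (Real.exp (-(A * |s-v|))) := by
    intro s
    calc ∫⁻ t in Ioc (0:ℝ) 1, ENNReal.ofReal (h3 (t-u) (s-v) z)
        ≤ ∫⁻ t in Ioc (0:ℝ) 1,
            (ENNReal.ofReal (3/(2*Real.sqrt π)) * ENNReal.ofReal (Real.exp (-(A * |s-v|))))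
            * ENNReal.ofReal (if 0 < t - u then (t-u) ^ (-(1/2):ℝ) * Real.exp (-(3*z/2*(t-u))) else 0) := by
          apply lintegral_mono; intro t
          dsimp only
          rw [← ENNReal.ofReal_mul (by positivity), ← ENNReal.ofReal_mul (by positivity)]
          apply ENNReal.ofReal_le_ofReal
          calc h3 (t-u) (s-v) z ≤ (3/(2*Real.sqrt π))
              * (if 0 < t-u then (t-u) ^ (-(1/2):ℝ) * Real.exp (-(3*z/2*(t-u))) else 0)
              * Real.exp (-(A * |s-v|)) := h3_le_prod hz (t-u) (s-v)
            _ = 3/(2*Real.sqrt π) * Real.exp (-(A * |s-v|))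
              * (if 0 < t-u then (t-u) ^ (-(1/2):ℝ) * Real.exp (-(3*z/2*(t-u))) else 0) := by ring
      _ = (ENNReal.ofReal (3/(2*Real.sqrt π)) * ENNReal.ofReal (Real.exp (-(A * |s-v|))))
            * ∫⁻ t in Ioc (0:ℝ) 1,
              ENNReal.ofReal (if 0 < t - u then (t-u) ^ (-(1/2):ℝ) * Real.exp (-(3*z/2*(t-u))) else 0) :=
          lintegral_const_mul' _ _ (ENNReal.mul_ne_top ENNReal.ofReal_ne_top ENNReal.ofReal_ne_top)
      _ ≤ (ENNReal.ofReal (3/(2*Real.sqrt π)) * ENNReal.ofReal (Real.exp (-(A * |s-v|))))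
            * ENNReal.ofReal (Real.sqrt π / A) := by
          apply mul_le_mul_right
          rw [← Qint]
          exact lintegral_mono' Measure.restrict_le_self le_rfl
      _ = ENNReal.ofReal ((3/2) / A) * ENNReal.ofReal (Real.exp (-(A * |s-v|))) := by
          rw [← ENNReal.ofReal_mul (by positivity), ← ENNReal.ofReal_mul (by positivity),
            ← ENNReal.ofReal_mul (by positivity)]
          congr 1
          have hπ : Real.sqrt π > 0 := Real.sqrt_pos.mpr pi_pos
          field_simp
  calc ∫⁻ s in Ioc (0:ℝ) 1, ∫⁻ t in Ioc (0:ℝ) 1, ENNReal.ofReal (h3 (t-u) (s-v) z)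
      ≤ ∫⁻ s in Ioc (0:ℝ) 1,
          ENNReal.ofReal ((3/2) / A) * ENNReal.ofReal (Real.exp (-(A * |s-v|))) :=
        setLIntegral_mono' measurableSet_Ioc (fun s _ => step1 s)
    _ ≤ ∫⁻ s : ℝ, ENNReal.ofReal ((3/2) / A) * ENNReal.ofReal (Real.exp (-(A * |s-v|))) :=
        lintegral_mono' Measure.restrict_le_self le_rfl
    _ = ENNReal.ofReal ((3/2) / A) * ∫⁻ s : ℝ, ENNReal.ofReal (Real.exp (-(A * |s-v|))) :=
        lintegral_const_mul' _ _ ENNReal.ofReal_ne_top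
    _ ≤ ENNReal.ofReal ((3/2) / A) * ENNReal.ofReal (2 / A) := by
        apply mul_le_mul_right
        rw [lintegral_translate (f := fun x => ENNReal.ofReal (Real.exp (-(A * |x|)))) v]
        exact lint_exp_abs hApos
    _ = ENNReal.ofReal (2 / z) := by
        rw [← ENNReal.ofReal_mul (by positivity)]
        congr 1
        rw [show (3:ℝ)/2 / A * (2 / A) = 3 / A^2 by field_simp, hA2]
        field_simp

lemma Lk_v_int (u : ℝ) {z : ℝ} (hz : 0 < z) :
    ∫⁻ v : ℝ, Lk u v z
      ≤ ENNReal.ofReal (3 * Real.exp (3*z*(min u 0))) * min 1 (ENNReal.ofReal (1/(3*z))) := by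
  have m1 : Measurable fun p : ℝ × ℝ =>
      ∫⁻ t in Ioc (0:ℝ) 1, ENNReal.ofReal (h3 (t-u) (p.2 - p.1) z) := by
    have hm : Measurable fun r : (ℝ × ℝ) × ℝ =>
        ENNReal.ofReal (h3 (r.2 - u) (r.1.2 - r.1.1) z) :=
      h3_comp_meas (measurable_snd.sub measurable_const)
        (measurable_fst.snd.sub measurable_fst.fst) measurable_const
    exact hm.lintegral_prod_right'
  have swap1 : ∫⁻ v : ℝ, Lk u v z
      = ∫⁻ s in Ioc (0:ℝ) 1, ∫⁻ v : ℝ, ∫⁻ t in Ioc (0:ℝ) 1,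
          ENNReal.ofReal (h3 (t-u) (s-v) z) := by
    unfold Lk
    exact lintegral_lintegral_swap m1.aemeasurable
  have swap2 : ∀ s : ℝ, ∫⁻ v : ℝ, ∫⁻ t in Ioc (0:ℝ) 1, ENNReal.ofReal (h3 (t-u) (s-v) z)
      = ∫⁻ t in Ioc (0:ℝ) 1, ∫⁻ v : ℝ, ENNReal.ofReal (h3 (t-u) (s-v) z) := by
    intro s
    have m2 : Measurable fun p : ℝ × ℝ => ENNReal.ofReal (h3 (p.2 - u) (s - p.1) z) :=
      h3_comp_meas (measurable_snd.sub measurable_const)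
        (measurable_const.sub measurable_fst) measurable_const
    exact lintegral_lintegral_swap m2.aemeasurable
  have hinner : ∀ t s : ℝ, (∫⁻ v : ℝ, ENNReal.ofReal (h3 (t-u) (s-v) z))
      = ENNReal.ofReal (if u < t then 3 * Real.exp (-(3*z*(t-u))) else 0) := by
    intro t s
    by_cases ht : u < t
    · have hτ : 0 < t - u := by linarith
      rw [if_pos ht]
      have hrw : ∀ v : ℝ, h3 (t-u) (s-v) z
          = (3/(2*Real.sqrt (Real.pi*(t-u))) * Real.exp (-(3*z*(t-u))))
            * Real.exp (-((v-s)^2/(4*(t-u)))) := by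
        intro v
        unfold h3
        symm
        rw [if_pos hτ, mul_assoc, ← Real.exp_add]
        congr 1
        exact congrArg Real.exp (by ring)
      simp_rw [hrw]
      simp_rw [ENNReal.ofReal_mul (show (0:ℝ) ≤ 3/(2*Real.sqrt (Real.pi*(t-u))) * Real.exp (-(3*z*(t-u))) by positivity)]
      rw [lintegral_const_mul' _ _ ENNReal.ofReal_ne_top]
      rw [lint_gaussian hτ s]
      rw [← ENNReal.ofReal_mul (by positivity)]
      congr 1
      have hs : Real.sqrt (Real.pi*(t-u)) > 0 := Real.sqrt_pos.mpr (by positivity)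
      field_simp
    · rw [if_neg ht]
      have h0 : ∀ v : ℝ, h3 (t-u) (s-v) z = 0 := fun v => by
        unfold h3; rw [if_neg (by intro hc; exact ht (by linarith))]
      simp [h0]
  rw [swap1]
  have hJ : ∫⁻ s in Ioc (0:ℝ) 1, ∫⁻ v : ℝ, ∫⁻ t in Ioc (0:ℝ) 1,
        ENNReal.ofReal (h3 (t-u) (s-v) z)
      = ∫⁻ _ in Ioc (0:ℝ) 1, (∫⁻ t in Ioc (0:ℝ) 1,
          ENNReal.ofReal (if u < t then 3 * Real.exp (-(3*z*(t-u))) else 0)) := by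
    refine setLIntegral_congr_fun measurableSet_Ioc (fun s _ => ?_)
    rw [swap2 s]
    exact lintegral_congr fun t => hinner t s
  rw [hJ, setLIntegral_const, Real.volume_Ioc]
  rw [show ENNReal.ofReal (1 - 0 : ℝ) = 1 by norm_num, mul_one]
  set J := ∫⁻ t in Ioc (0:ℝ) 1,
      ENNReal.ofReal (if u < t then 3 * Real.exp (-(3*z*(t-u))) else 0) with hJdef
  have D1 : J ≤ ENNReal.ofReal (3 * Real.exp (3*z*(min u 0))) := by
    have hemin : ∀ t ∈ Ioc (0:ℝ) 1, ENNReal.ofReal (if u < t then 3 * Real.exp (-(3*z*(t-u))) else 0)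
        ≤ ENNReal.ofReal (3 * Real.exp (3*z*(min u 0))) := by
      intro t ht
      apply ENNReal.ofReal_le_ofReal
      split_ifs with h
      · apply mul_le_mul_of_nonneg_left _ (by norm_num)
        apply Real.exp_le_exp.mpr
        rcases le_total u 0 with hu | hu
        · rw [min_eq_left hu]; nlinarith [ht.1]
        · rw [min_eq_right hu]; nlinarith
      · positivity
    calc J ≤ ∫⁻ _ in Ioc (0:ℝ) 1, ENNReal.ofReal (3 * Real.exp (3*z*(min u 0))) :=
        setLIntegral_mono' measurableSet_Ioc hemin
      _ = ENNReal.ofReal (3 * Real.exp (3*z*(min u 0))) := by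
        rw [setLIntegral_const, Real.volume_Ioc]
        rw [show ENNReal.ofReal (1 - 0 : ℝ) = 1 by norm_num, mul_one]
  have D2 : J ≤ ENNReal.ofReal (3 * Real.exp (3*z*(min u 0))) * ENNReal.ofReal (1/(3*z)) := by
    set b := max u 0 with hb
    have humb : min u 0 + max u 0 = u := by simpa using min_add_max u 0
    have hsplit : ∀ t ∈ Ioc (0:ℝ) 1,
        ENNReal.ofReal (if u < t then 3 * Real.exp (-(3*z*(t-u))) else 0)
        ≤ ENNReal.ofReal (3 * Real.exp (3*z*(min u 0)))
          * ENNReal.ofReal (if b < t then Real.exp (-(3*z*(t-b))) else 0) := by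
      intro t ht
      rw [← ENNReal.ofReal_mul (by positivity)]
      apply ENNReal.ofReal_le_ofReal
      split_ifs with h1 h2
      · apply le_of_eq
        symm
        rw [mul_assoc, ← Real.exp_add]
        congr 1
        exact congrArg Real.exp (by linear_combination 3*z*humb)
      · exact absurd (max_lt h1 ht.1) h2
      · positivity
      · simp
    have tail : ∫⁻ t in Ioc (0:ℝ) 1, ENNReal.ofReal (if b < t then Real.exp (-(3*z*(t-b))) else 0)
        ≤ ENNReal.ofReal (1/(3*z)) := by
      have hind : (fun t : ℝ => ENNReal.ofReal (if b < t then Real.exp (-(3*z*(t-b))) else 0))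
          = (Ioi b).indicator (fun t => ENNReal.ofReal (Real.exp (-(3*z*(t-b))))) := by
        funext t; by_cases h : b < t <;> simp [Set.indicator, h]
      calc ∫⁻ t in Ioc (0:ℝ) 1, ENNReal.ofReal (if b < t then Real.exp (-(3*z*(t-b))) else 0)
          ≤ ∫⁻ t : ℝ, ENNReal.ofReal (if b < t then Real.exp (-(3*z*(t-b))) else 0) :=
            lintegral_mono' Measure.restrict_le_self le_rfl
        _ = ∫⁻ t in Ioi b, ENNReal.ofReal (Real.exp (-(3*z*(t-b)))) := by
            rw [hind, lintegral_indicator measurableSet_Ioi]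
        _ = ∫⁻ x in Ioi (0:ℝ), ENNReal.ofReal (Real.exp (-(3*z*x))) := by
            have := setLIntegral_translate
              (f := fun x => ENNReal.ofReal (Real.exp (-(3*z*x)))) b (Ioi b)
            rw [this, image_add_const_Ioi]
            norm_num
        _ = ENNReal.ofReal (1/(3*z)) := by
            rw [lint_exp_tail (by linarith) 0]
            norm_num
    calc J ≤ ∫⁻ t in Ioc (0:ℝ) 1, ENNReal.ofReal (3 * Real.exp (3*z*(min u 0)))
          * ENNReal.ofReal (if b < t then Real.exp (-(3*z*(t-b))) else 0) :=
        setLIntegral_mono' measurableSet_Ioc hsplit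
      _ = ENNReal.ofReal (3 * Real.exp (3*z*(min u 0)))
          * ∫⁻ t in Ioc (0:ℝ) 1, ENNReal.ofReal (if b < t then Real.exp (-(3*z*(t-b))) else 0) :=
        lintegral_const_mul' _ _ ENNReal.ofReal_ne_top
      _ ≤ _ := mul_le_mul_right tail _
  rcases le_total (1 : ℝ≥0∞) (ENNReal.ofReal (1/(3*z))) with h | h
  · rw [min_eq_left h, mul_one]; exact D1
  · rw [min_eq_right h]; exact D2

end kernel


noncomputable def Bz (z : ℝ) : ℝ≥0∞ := min (ENNReal.ofReal 2) (ENNReal.ofReal (2/z))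

section final

open Real

lemma Bz_rpow_ne_top {α z : ℝ} (hα : 0 ≤ α - 1) : Bz z ^ (α - 1) ≠ ⊤ := by
  apply ENNReal.rpow_ne_top_of_nonneg hα
  exact ne_top_of_le_ne_top ENNReal.ofReal_ne_top (min_le_left _ _)

lemma Bz_meas : Measurable Bz :=
  measurable_const.min (ENNReal.measurable_ofReal.comp (measurable_const.div measurable_id))

lemma point_bound (α β : ℝ) (hα1 : 1 < α) (u v z : ℝ) (hz : 0 < z) :
    ENNReal.ofReal ((∫ s in Ioc (0:ℝ) 1, ∫ t in Ioc (0:ℝ) 1, h3 (t - u) (s - v) z) ^ α * z ^ β)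
      ≤ Bz z ^ (α - 1) * ENNReal.ofReal (z ^ β) * Lk u v z := by
  set F := ∫ s in Ioc (0:ℝ) 1, ∫ t in Ioc (0:ℝ) 1, h3 (t - u) (s - v) z with hFdef
  have hF : 0 ≤ F := integral_nonneg fun s => integral_nonneg fun t => h3_nonneg _ _ _
  have hFL : ENNReal.ofReal F ≤ Lk u v z := by
    unfold Lk
    calc ENNReal.ofReal F
        ≤ ∫⁻ s in Ioc (0:ℝ) 1, ENNReal.ofReal (∫ t in Ioc (0:ℝ) 1, h3 (t - u) (s - v) z) :=
          ofReal_int_le _ _ (Filter.Eventually.of_forall fun s =>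
            integral_nonneg fun t => h3_nonneg _ _ _)
      _ ≤ _ := lintegral_mono fun s => ofReal_int_le _ _
            (Filter.Eventually.of_forall fun t => h3_nonneg _ _ _)
  have hLkB : Lk u v z ≤ Bz z := le_min (Lk_le_small u v z hz.le) (Lk_le_inv u v hz)
  have hFB : ENNReal.ofReal F ≤ Bz z := hFL.trans hLkB
  rw [ENNReal.ofReal_mul (Real.rpow_nonneg hF α), ← ENNReal.ofReal_rpow_of_nonneg hF (by linarith)]
  have hxα : (ENNReal.ofReal F) ^ α ≤ Bz z ^ (α - 1) * Lk u v z := by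
    by_cases h0 : ENNReal.ofReal F = 0
    · rw [h0, ENNReal.zero_rpow_of_pos (by linarith)]
      exact zero_le
    · calc (ENNReal.ofReal F) ^ α = (ENNReal.ofReal F) ^ ((α - 1) + 1) := by norm_num
        _ = (ENNReal.ofReal F) ^ (α-1) * (ENNReal.ofReal F) ^ (1:ℝ) :=
          ENNReal.rpow_add _ _ h0 ENNReal.ofReal_ne_top
        _ = (ENNReal.ofReal F) ^ (α-1) * ENNReal.ofReal F := by rw [ENNReal.rpow_one]
        _ ≤ Bz z ^ (α - 1) * Lk u v z :=
          mul_le_mul' (ENNReal.rpow_le_rpow hFB (by linarith)) hFL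
  calc ENNReal.ofReal F ^ α * ENNReal.ofReal (z ^ β)
      ≤ (Bz z ^ (α - 1) * Lk u v z) * ENNReal.ofReal (z ^ β) := mul_le_mul_left hxα _
    _ = Bz z ^ (α - 1) * ENNReal.ofReal (z ^ β) * Lk u v z := by ring

lemma lint_Ioi1_rpow {p : ℝ} (hp : p < -1) :
    ∫⁻ z in Ioi (1:ℝ), ENNReal.ofReal (z ^ p) < ⊤ := by
  have hi := integrableOn_Ioi_rpow_of_lt hp one_pos
  exact lt_of_le_of_lt (lintegral_mono fun z => Real.ofReal_le_enorm _) hi.2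

lemma lint_Ioc01_rpow {p : ℝ} (hp : -1 < p) :
    ∫⁻ z in Ioc (0:ℝ) 1, ENNReal.ofReal (z ^ p) < ⊤ := by
  have hi : IntegrableOn (fun z : ℝ => z ^ p) (Ioc 0 1) :=
    (intervalIntegrable_iff_integrableOn_Ioc_of_le zero_le_one).1
      (intervalIntegral.intervalIntegrable_rpow' hp)
  exact lt_of_le_of_lt (lintegral_mono fun z => Real.ofReal_le_enorm _) hi.2

lemma lint_Ioi0_fin {p₁ p₂ C : ℝ} (h1 : -1 < p₁) (h2 : p₂ < -1) {f : ℝ → ℝ≥0∞}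
    (hb1 : ∀ z, 0 < z → z ≤ 1 → f z ≤ ENNReal.ofReal C * ENNReal.ofReal (z ^ p₁))
    (hb2 : ∀ z, 1 < z → f z ≤ ENNReal.ofReal C * ENNReal.ofReal (z ^ p₂)) :
    ∫⁻ z in Ioi (0:ℝ), f z < ⊤ := by
  rw [← Ioc_union_Ioi_eq_Ioi (zero_le_one (α := ℝ)),
    lintegral_union measurableSet_Ioi (Ioc_disjoint_Ioi le_rfl)]
  apply ENNReal.add_lt_top.mpr
  constructor
  · calc ∫⁻ z in Ioc (0:ℝ) 1, f z
        ≤ ∫⁻ z in Ioc (0:ℝ) 1, ENNReal.ofReal C * ENNReal.ofReal (z ^ p₁) :=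
          setLIntegral_mono' measurableSet_Ioc (fun z hz => hb1 z hz.1 hz.2)
      _ = ENNReal.ofReal C * ∫⁻ z in Ioc (0:ℝ) 1, ENNReal.ofReal (z ^ p₁) :=
          lintegral_const_mul' _ _ ENNReal.ofReal_ne_top
      _ < ⊤ := ENNReal.mul_lt_top ENNReal.ofReal_lt_top (lint_Ioc01_rpow h1)
  · calc ∫⁻ z in Ioi (1:ℝ), f z
        ≤ ∫⁻ z in Ioi (1:ℝ), ENNReal.ofReal C * ENNReal.ofReal (z ^ p₂) :=
          setLIntegral_mono' measurableSet_Ioi (fun z hz => hb2 z hz)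
      _ = ENNReal.ofReal C * ∫⁻ z in Ioi (1:ℝ), ENNReal.ofReal (z ^ p₂) :=
          lintegral_const_mul' _ _ ENNReal.ofReal_ne_top
      _ < ⊤ := ENNReal.mul_lt_top ENNReal.ofReal_lt_top (lint_Ioi1_rpow h2)

lemma real_pow_calc (α β : ℝ) {z : ℝ} (hz : 1 < z) :
    (2/z)^(α-1) * z^β * (3*(1/(3*z))) = 2^(α-1) * z^(β-α) := by
  have hz0 : (0:ℝ) < z := by linarith
  have h1 : z ^ (α-1) ≠ 0 := (Real.rpow_pos_of_pos hz0 _).ne'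
  have h2 : z ^ β ≠ 0 := (Real.rpow_pos_of_pos hz0 _).ne'
  rw [Real.div_rpow (by norm_num) hz0.le]
  rw [show β - α = -(α-1) + β + (-1) by ring]
  rw [Real.rpow_add hz0, Real.rpow_add hz0, Real.rpow_neg_one, Real.rpow_neg hz0.le]
  field_simp

lemma Bz_rpow_le_const {α : ℝ} (hα1 : 1 < α) (z : ℝ) :
    Bz z ^ (α-1) ≤ ENNReal.ofReal (2^(α-1)) := by
  calc Bz z ^ (α-1) ≤ (ENNReal.ofReal 2) ^ (α-1) :=
      ENNReal.rpow_le_rpow (min_le_left _ _) (by linarith)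
    _ = ENNReal.ofReal (2^(α-1)) := ENNReal.ofReal_rpow_of_nonneg (by norm_num) (by linarith)

lemma Bz_rpow_le_inv {α : ℝ} (hα1 : 1 < α) {z : ℝ} (hz : 0 < z) :
    Bz z ^ (α-1) ≤ ENNReal.ofReal ((2/z)^(α-1)) := by
  calc Bz z ^ (α-1) ≤ (ENNReal.ofReal (2/z)) ^ (α-1) :=
      ENNReal.rpow_le_rpow (min_le_right _ _) (by linarith)
    _ = _ := ENNReal.ofReal_rpow_of_nonneg (by positivity) (by linarith)

lemma S1_fin (α β : ℝ) (hα1 : 1 < α) (hβ0 : 0 < β) (hβ : β < α - 1) :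
    ∫⁻ z in Ioi (0:ℝ), Bz z ^ (α-1) * ENNReal.ofReal (z^β)
      * (ENNReal.ofReal 3 * min 1 (ENNReal.ofReal (1/(3*z)))) < ⊤ := by
  apply lint_Ioi0_fin (p₁ := 0) (p₂ := β - α) (C := 3 * 2^(α-1))
    (by norm_num) (by linarith)
  · intro z hz0 hz1
    have hzβ : ENNReal.ofReal (z^β) ≤ 1 := by
      rw [show (1:ℝ≥0∞) = ENNReal.ofReal 1 by simp]
      exact ENNReal.ofReal_le_ofReal (Real.rpow_le_one hz0.le hz1 hβ0.le)
    calc Bz z ^ (α-1) * ENNReal.ofReal (z^β)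
          * (ENNReal.ofReal 3 * min 1 (ENNReal.ofReal (1/(3*z))))
        ≤ ENNReal.ofReal (2^(α-1)) * 1 * (ENNReal.ofReal 3 * 1) :=
          mul_le_mul' (mul_le_mul' (Bz_rpow_le_const hα1 z) hzβ)
            (mul_le_mul' le_rfl (min_le_left _ _))
      _ = ENNReal.ofReal (3 * 2^(α-1)) * ENNReal.ofReal (z ^ (0:ℝ)) := by
          rw [Real.rpow_zero, ENNReal.ofReal_one, mul_one, mul_one,
            ← ENNReal.ofReal_mul (by positivity : (0:ℝ) ≤ 2^(α-1))]
          congr 1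
          ring
  · intro z hz1
    have hz0 : (0:ℝ) < z := lt_trans one_pos hz1
    calc Bz z ^ (α-1) * ENNReal.ofReal (z^β)
          * (ENNReal.ofReal 3 * min 1 (ENNReal.ofReal (1/(3*z))))
        ≤ ENNReal.ofReal ((2/z)^(α-1)) * ENNReal.ofReal (z^β)
          * (ENNReal.ofReal 3 * ENNReal.ofReal (1/(3*z))) :=
          mul_le_mul' (mul_le_mul' (Bz_rpow_le_inv hα1 hz0) le_rfl)
            (mul_le_mul' le_rfl (min_le_right _ _))
      _ = ENNReal.ofReal ((2/z)^(α-1) * z^β * (3*(1/(3*z)))) := by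
          rw [← ENNReal.ofReal_mul (by norm_num : (0:ℝ) ≤ 3),
            ← ENNReal.ofReal_mul (by positivity : (0:ℝ) ≤ (2/z)^(α-1)),
            ← ENNReal.ofReal_mul (by positivity)]
      _ ≤ ENNReal.ofReal (3 * 2^(α-1)) * ENNReal.ofReal (z ^ (β-α)) := by
          rw [real_pow_calc α β hz1, ← ENNReal.ofReal_mul (by positivity)]
          apply ENNReal.ofReal_le_ofReal
          have ha : (0:ℝ) ≤ z^(β-α) := Real.rpow_nonneg hz0.le _
          have hc : (0:ℝ) ≤ 2^(α-1) := Real.rpow_nonneg (by norm_num) _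
          nlinarith [mul_nonneg hc ha]

lemma S2_fin (α β : ℝ) (hα1 : 1 < α) (hβ0 : 0 < β) (hβ : β < α - 1) :
    ∫⁻ z in Ioi (0:ℝ), Bz z ^ (α-1) * ENNReal.ofReal (z^β)
      * (ENNReal.ofReal 3 * min 1 (ENNReal.ofReal (1/(3*z)))) * ENNReal.ofReal (1/(3*z)) < ⊤ := by
  apply lint_Ioi0_fin (p₁ := β - 1) (p₂ := β - α - 1) (C := 3 * 2^(α-1))
    (by linarith) (by linarith)
  · intro z hz0 hz1
    calc Bz z ^ (α-1) * ENNReal.ofReal (z^β)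
          * (ENNReal.ofReal 3 * min 1 (ENNReal.ofReal (1/(3*z)))) * ENNReal.ofReal (1/(3*z))
        ≤ ENNReal.ofReal (2^(α-1)) * ENNReal.ofReal (z^β)
          * (ENNReal.ofReal 3 * 1) * ENNReal.ofReal (1/(3*z)) :=
          mul_le_mul' (mul_le_mul' (mul_le_mul' (Bz_rpow_le_const hα1 z) le_rfl)
            (mul_le_mul' le_rfl (min_le_left _ _))) le_rfl
      _ = ENNReal.ofReal (2^(α-1) * (z^β * (3*(1/(3*z))))) := by
          rw [mul_one,
            ← ENNReal.ofReal_mul (by positivity : (0:ℝ) ≤ 2^(α-1)),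
            ← ENNReal.ofReal_mul (by positivity),
            ← ENNReal.ofReal_mul (by positivity)]
          congr 1
          ring
      _ ≤ ENNReal.ofReal (3 * 2^(α-1)) * ENNReal.ofReal (z ^ (β-1)) := by
          have hzid : z^β * (3*(1/(3*z))) = z^(β-1) := by
            rw [show β - 1 = β + (-1) by ring, Real.rpow_add hz0, Real.rpow_neg_one]
            field_simp
          rw [hzid, ← ENNReal.ofReal_mul (by positivity)]
          apply ENNReal.ofReal_le_ofReal
          have ha : (0:ℝ) ≤ z^(β-1) := Real.rpow_nonneg hz0.le _
          have hc : (0:ℝ) ≤ 2^(α-1) := Real.rpow_nonneg (by norm_num) _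
          nlinarith [mul_nonneg hc ha]
  · intro z hz1
    have hz0 : (0:ℝ) < z := lt_trans one_pos hz1
    calc Bz z ^ (α-1) * ENNReal.ofReal (z^β)
          * (ENNReal.ofReal 3 * min 1 (ENNReal.ofReal (1/(3*z)))) * ENNReal.ofReal (1/(3*z))
        ≤ ENNReal.ofReal ((2/z)^(α-1)) * ENNReal.ofReal (z^β)
          * (ENNReal.ofReal 3 * ENNReal.ofReal (1/(3*z))) * ENNReal.ofReal (1/(3*z)) :=
          mul_le_mul' (mul_le_mul' (mul_le_mul' (Bz_rpow_le_inv hα1 hz0) le_rfl)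
            (mul_le_mul' le_rfl (min_le_right _ _))) le_rfl
      _ = ENNReal.ofReal ((2/z)^(α-1) * z^β * (3*(1/(3*z))) * (1/(3*z))) := by
          rw [← ENNReal.ofReal_mul (by norm_num : (0:ℝ) ≤ 3),
            ← ENNReal.ofReal_mul (by positivity : (0:ℝ) ≤ (2/z)^(α-1)),
            ← ENNReal.ofReal_mul (by positivity),
            ← ENNReal.ofReal_mul (by positivity)]
      _ ≤ ENNReal.ofReal (3 * 2^(α-1)) * ENNReal.ofReal (z ^ (β-α-1)) := by
          rw [real_pow_calc α β hz1, ← ENNReal.ofReal_mul (by positivity)]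
          apply ENNReal.ofReal_le_ofReal
          have hzid : z ^ (β-α-1) = z^(β-α) * z⁻¹ := by
            rw [show β - α - 1 = (β-α) + (-1) by ring, Real.rpow_add hz0, Real.rpow_neg_one]
          rw [hzid]
          have ha : (0:ℝ) ≤ z^(β-α) := Real.rpow_nonneg hz0.le _
          have hc : (0:ℝ) ≤ 2^(α-1) := Real.rpow_nonneg (by norm_num) _
          have hzi : (0:ℝ) ≤ z⁻¹ := by positivity
          have hle : (1:ℝ)/(3*z) ≤ z⁻¹ := by
            rw [one_div]
            apply inv_anti₀ hz0
            nlinarith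
          nlinarith [mul_nonneg (mul_nonneg hc ha) hzi,
            mul_le_mul_of_nonneg_left hle (mul_nonneg hc ha)]

end final

/-- Proposition 5.1 (i), case `γ = 1/2`: for `1 < α ≤ 2` and `0 < β < α - 1`,
`∫_ℝ ∫_ℝ ∫_0^∞ (∫_0^1 ∫_0^1 h₃(t-u, s-v, z) dt ds)^α z^β dz dv du < ∞`. -/
theorem h3_kernel_integrable (α β : ℝ) (hα1 : 1 < α) (hα2 : α ≤ 2)
    (hβ0 : 0 < β) (hβ : β < α - 1) :
    ∫⁻ u : ℝ, ∫⁻ v : ℝ, ∫⁻ z in Set.Ioi (0 : ℝ),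
      ENNReal.ofReal
        ((∫ s in Set.Ioc (0 : ℝ) 1, ∫ t in Set.Ioc (0 : ℝ) 1, h3 (t - u) (s - v) z) ^ α *
          z ^ β) < ⊤ := by
  have hα0 : (0:ℝ) ≤ α - 1 := by linarith
  set G : ℝ → ℝ≥0∞ := fun u => ∫⁻ v : ℝ, ∫⁻ z in Set.Ioi (0 : ℝ),
      ENNReal.ofReal
        ((∫ s in Set.Ioc (0 : ℝ) 1, ∫ t in Set.Ioc (0 : ℝ) 1, h3 (t - u) (s - v) z) ^ α *
          z ^ β) with hG
  set W : ℝ → ℝ≥0∞ := fun u => ∫⁻ z in Ioi (0:ℝ), Bz z ^ (α-1) * ENNReal.ofReal (z^β)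
      * (ENNReal.ofReal (3 * Real.exp (3*z*(min u 0))) * min 1 (ENNReal.ofReal (1/(3*z))))
    with hW
  have Wbound : ∀ u, G u ≤ W u := by
    intro u
    have meas1 : Measurable fun p : ℝ × ℝ =>
        Bz p.2 ^ (α-1) * ENNReal.ofReal (p.2 ^ β) * Lk u p.1 p.2 := by
      apply Measurable.mul
      · apply Measurable.mul
        · exact (Bz_meas.comp measurable_snd).pow measurable_const
        · exact ENNReal.measurable_ofReal.comp (measurable_snd.pow measurable_const)
      · exact Lk_meas u
    calc G u ≤ ∫⁻ v : ℝ, ∫⁻ z in Ioi (0:ℝ), Bz z ^ (α-1) * ENNReal.ofReal (z^β) * Lk u v z := by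
          rw [hG]
          apply lintegral_mono; intro v
          exact setLIntegral_mono' measurableSet_Ioi (fun z hz => point_bound α β hα1 u v z hz)
      _ = ∫⁻ z in Ioi (0:ℝ), ∫⁻ v : ℝ, Bz z ^ (α-1) * ENNReal.ofReal (z^β) * Lk u v z :=
          lintegral_lintegral_swap meas1.aemeasurable
      _ = ∫⁻ z in Ioi (0:ℝ), Bz z ^ (α-1) * ENNReal.ofReal (z^β) * ∫⁻ v : ℝ, Lk u v z :=
          lintegral_congr fun z => lintegral_const_mul' _ _
            (ENNReal.mul_ne_top (Bz_rpow_ne_top hα0) ENNReal.ofReal_ne_top)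
      _ ≤ W u := by
          rw [hW]
          exact setLIntegral_mono' measurableSet_Ioi
            (fun z hz => mul_le_mul_right (Lk_v_int u hz) _)
  rw [← lintegral_add_compl G (measurableSet_Iio (a := (1:ℝ)))]
  apply ENNReal.add_lt_top.mpr
  constructor
  · -- u < 1
    calc ∫⁻ u in Iio (1:ℝ), G u
        ≤ ∫⁻ u in Iio (1:ℝ), W u := lintegral_mono fun u => Wbound u
      _ = (∫⁻ u in Iio (0:ℝ), W u) + ∫⁻ u in Ico (0:ℝ) 1, W u := by
          rw [← Iio_union_Ico_eq_Iio (zero_le_one (α := ℝ)),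
            lintegral_union measurableSet_Ico (by
              rw [Set.disjoint_left]; intro x hx hx2; exact absurd hx2.1 (not_le.mpr hx))]
      _ < ⊤ := by
          apply ENNReal.add_lt_top.mpr
          constructor
          · -- u < 0
            have hcongr2 : ∀ u ∈ Iio (0:ℝ), W u = ∫⁻ z in Ioi (0:ℝ),
                (Bz z ^ (α-1) * ENNReal.ofReal (z^β)
                  * (ENNReal.ofReal 3 * min 1 (ENNReal.ofReal (1/(3*z)))))
                  * ENNReal.ofReal (Real.exp (3*z*u)) := by
              intro u hu
              rw [hW]
              refine lintegral_congr fun z => ?_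
              rw [min_eq_left (le_of_lt hu), ENNReal.ofReal_mul (by norm_num : (0:ℝ) ≤ 3)]
              ring
            rw [setLIntegral_congr_fun measurableSet_Iio hcongr2]
            have meas2 : Measurable fun p : ℝ × ℝ =>
                (Bz p.2 ^ (α-1) * ENNReal.ofReal (p.2^β)
                  * (ENNReal.ofReal 3 * min 1 (ENNReal.ofReal (1/(3*p.2)))))
                  * ENNReal.ofReal (Real.exp (3*p.2*p.1)) := by
              apply Measurable.mul
              · apply Measurable.mul
                · apply Measurable.mul
                  · exact (Bz_meas.comp measurable_snd).pow measurable_const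
                  · exact ENNReal.measurable_ofReal.comp (measurable_snd.pow measurable_const)
                · apply Measurable.const_mul
                  apply Measurable.min measurable_const
                  exact ENNReal.measurable_ofReal.comp (by fun_prop)
              · exact ENNReal.measurable_ofReal.comp (by fun_prop)
            rw [lintegral_lintegral_swap meas2.aemeasurable]
            have hin : ∀ z ∈ Ioi (0:ℝ), (∫⁻ u in Iio (0:ℝ),
                (Bz z ^ (α-1) * ENNReal.ofReal (z^β)
                  * (ENNReal.ofReal 3 * min 1 (ENNReal.ofReal (1/(3*z)))))
                  * ENNReal.ofReal (Real.exp (3*z*u)))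
                = Bz z ^ (α-1) * ENNReal.ofReal (z^β)
                  * (ENNReal.ofReal 3 * min 1 (ENNReal.ofReal (1/(3*z))))
                  * ENNReal.ofReal (1/(3*z)) := by
              intro z hz
              have hCne : Bz z ^ (α-1) * ENNReal.ofReal (z^β)
                  * (ENNReal.ofReal 3 * min 1 (ENNReal.ofReal (1/(3*z)))) ≠ ⊤ :=
                ENNReal.mul_ne_top
                  (ENNReal.mul_ne_top (Bz_rpow_ne_top hα0) ENNReal.ofReal_ne_top)
                  (ENNReal.mul_ne_top ENNReal.ofReal_ne_top
                    (ne_top_of_le_ne_top ENNReal.one_ne_top (min_le_left _ _)))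
              rw [lintegral_const_mul' _ _ hCne]
              congr 1
              rw [lintegral_Iio_neg (f := fun u => ENNReal.ofReal (Real.exp (3*z*u)))]
              rw [setLIntegral_congr_fun measurableSet_Ioi
                (fun x _ => congrArg ENNReal.ofReal (congrArg Real.exp (by ring :
                  3*z*(-x) = -(3*z*x))))]
              rw [lint_exp_tail (mul_pos (by norm_num : (0:ℝ) < 3) hz) 0]
              norm_num
            rw [setLIntegral_congr_fun measurableSet_Ioi hin]
            exact S2_fin α β hα1 hβ0 hβ
          · -- 0 ≤ u < 1
            have hcongr : ∀ u ∈ Ico (0:ℝ) 1, W u = ∫⁻ z in Ioi (0:ℝ),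
                Bz z ^ (α-1) * ENNReal.ofReal (z^β)
                  * (ENNReal.ofReal 3 * min 1 (ENNReal.ofReal (1/(3*z)))) := by
              intro u hu
              rw [hW]
              refine lintegral_congr fun z => ?_
              rw [min_eq_right hu.1, mul_zero, Real.exp_zero, mul_one]
            rw [setLIntegral_congr_fun measurableSet_Ico hcongr]
            rw [setLIntegral_const, Real.volume_Ico]
            exact ENNReal.mul_lt_top (S1_fin α β hα1 hβ0 hβ) ENNReal.ofReal_lt_top
  · -- u ≥ 1
    rw [compl_Iio]
    have hzero : ∀ u ∈ Ici (1:ℝ), G u = 0 := by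
      intro u hu
      have hF0 : ∀ v z : ℝ,
          (∫ s in Ioc (0:ℝ) 1, ∫ t in Ioc (0:ℝ) 1, h3 (t-u) (s-v) z) = 0 := by
        intro v z
        have h1 : ∀ s ∈ Ioc (0:ℝ) 1, (∫ t in Ioc (0:ℝ) 1, h3 (t-u) (s-v) z) = 0 := by
          intro s _
          rw [setIntegral_congr_fun measurableSet_Ioc (g := fun _ : ℝ => (0:ℝ))
            (fun t ht => by
              unfold h3
              rw [if_neg (not_lt.mpr (by linarith [ht.2, mem_Ici.mp hu] : t - u ≤ 0))]),
            integral_zero]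
        rw [setIntegral_congr_fun measurableSet_Ioc h1, integral_zero]
      rw [hG]
      simp only [hF0]
      rw [Real.zero_rpow (by linarith : α ≠ 0)]
      simp
    rw [setLIntegral_congr_fun measurableSet_Ici hzero]
    simp
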